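/- arXiv:1307.5095 — 2 statements merged into one kernel-verified Lean document; each statement's English description precedes it below -/
import Mathlib

section
/- Let N = 2^n and let c : {0,...,n-1} → ℕ with c(j) = (j+1)·2^j be the complexity gain of freezing a group at stage j, where a group at stage j contains 2^j channels. Among all multisets of groups (with multiplicity a(j) of groups chosen at stage j, a(j) ≤ N/2^j) whose total channel count Σ_j a(j)·2^j equals a fixed k' with 0 ≤ k' < N, the total gain Σ_j a(j)·c(j) is maximized exactly when a(j) = bit_j(k'), the j-th bit of the binary representation of k'. In particular, any optimal solution has a(j) ≤ 1 for all j. -/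
open Finset

private lemma two_geom_lt (i : ℕ) : ∑ j ∈ range i, 2^j < 2^i := by
  induction i with
  | zero => simp
  | succ i ih => rw [Finset.sum_range_succ, pow_succ]; omega

private lemma bits_sum : ∀ (n k : ℕ), k < 2^n →
    ∑ j ∈ range n, (if k.testBit j then 1 else 0) * 2^j = k := by
  intro n
  induction n with
  | zero => intro k h; interval_cases k; simp
  | succ n ih =>
    intro k h
    have h2 : k / 2 < 2^n := by
      rw [Nat.div_lt_iff_lt_mul (by norm_num)]
      rw [pow_succ] at h; omega
    have ihk := ih (k / 2) h2
    rw [Finset.sum_range_succ']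
    have : ∀ i ∈ range n, (if k.testBit (i+1) then 1 else 0) * 2^(i+1)
        = 2 * ((if (k/2).testBit i then 1 else 0) * 2^i) := by
      intro i _
      rw [Nat.testBit_succ, pow_succ]; ring
    rw [Finset.sum_congr rfl this, ← Finset.mul_sum, ihk]
    have h0 : k.testBit 0 = decide (k % 2 = 1) := by simp [Nat.testBit_zero]
    rcases Nat.mod_two_eq_zero_or_one k with hm | hm <;> simp [h0, hm] <;> omega

private lemma transpose_sum (n : ℕ) (f : ℕ → ℕ) :
    ∑ i ∈ range n, ∑ j ∈ Finset.Ico i n, f j = ∑ j ∈ range n, (j+1) * f j := by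
  induction n with
  | zero => simp
  | succ n ih =>
    rw [Finset.sum_range_succ (f := fun j => (j+1) * f j), ← ih]
    rw [Finset.sum_range_succ]
    have : ∀ i ∈ range n, ∑ j ∈ Finset.Ico i (n+1), f j
        = (∑ j ∈ Finset.Ico i n, f j) + f n := by
      intro i hi
      have := Finset.mem_range.mp hi
      rw [Finset.sum_Ico_succ_top (by omega)]
    rw [Finset.sum_congr rfl this, Finset.sum_add_distrib]
    simp [Finset.Ico_self, mul_comm]
    ring

private lemma main_aux (n k : ℕ) (a b : ℕ → ℕ) (hb1 : ∀ j, b j ≤ 1)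
    (hbsum : ∑ j ∈ range n, b j * 2^j = k)
    (hrate : ∑ j ∈ range n, a j * 2^j = k) :
    (∑ j ∈ range n, a j * ((j+1) * 2^j) ≤ ∑ j ∈ range n, b j * ((j+1) * 2^j)) ∧
    ((∑ j ∈ range n, a j * ((j+1) * 2^j) = ∑ j ∈ range n, b j * ((j+1) * 2^j)) →
      ∀ j < n, a j = b j) := by
  have hdvd : ∀ (c : ℕ → ℕ) (i : ℕ), (2^i : ℕ) ∣ ∑ j ∈ Finset.Ico i n, c j * 2^j := by
    intro c i
    apply Finset.dvd_sum
    intro j hj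
    exact Dvd.dvd.mul_left (pow_dvd_pow 2 (Finset.mem_Ico.mp hj).1) (c j)
  have hsplit : ∀ (c : ℕ → ℕ) (i : ℕ), i ≤ n →
      (∑ j ∈ range i, c j * 2^j) + ∑ j ∈ Finset.Ico i n, c j * 2^j
        = ∑ j ∈ range n, c j * 2^j := fun c i hi =>
    Finset.sum_range_add_sum_Ico _ hi
  have hlowb : ∀ i, ∑ j ∈ range i, b j * 2^j < 2^i := by
    intro i
    calc ∑ j ∈ range i, b j * 2^j ≤ ∑ j ∈ range i, 2^j := by
          apply Finset.sum_le_sum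
          intro j _
          have := hb1 j
          nlinarith [pow_pos (by norm_num : (0:ℕ) < 2) j]
      _ < 2^i := two_geom_lt i
  have key : ∀ i ∈ range n,
      (∑ j ∈ Finset.Ico i n, a j * 2^j) ≤ ∑ j ∈ Finset.Ico i n, b j * 2^j := by
    intro i hi
    have hin : i ≤ n := le_of_lt (Finset.mem_range.mp hi)
    obtain ⟨qa, hqa⟩ := hdvd a i
    obtain ⟨qb, hqb⟩ := hdvd b i
    have hak : (∑ j ∈ Finset.Ico i n, a j * 2^j) ≤ k := by
      rw [← hrate, ← hsplit a i hin]; omega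
    have hbk : k < (∑ j ∈ Finset.Ico i n, b j * 2^j) + 2^i := by
      rw [← hbsum, ← hsplit b i hin]
      have := hlowb i
      omega
    rw [hqa, hqb] at *
    have hmul : 2^i * qa < 2^i * (qb + 1) := by rw [Nat.mul_succ]; omega
    have : qa < qb + 1 := Nat.lt_of_mul_lt_mul_left hmul
    exact Nat.mul_le_mul_left _ (by omega)
  have hgain : ∀ (c : ℕ → ℕ), ∑ j ∈ range n, c j * ((j+1) * 2^j)
      = ∑ i ∈ range n, ∑ j ∈ Finset.Ico i n, c j * 2^j := by
    intro c
    rw [transpose_sum n (fun j => c j * 2^j)]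
    apply Finset.sum_congr rfl
    intro j _
    ring
  have hle : ∑ j ∈ range n, a j * ((j+1) * 2^j) ≤ ∑ j ∈ range n, b j * ((j+1) * 2^j) := by
    rw [hgain a, hgain b]
    exact Finset.sum_le_sum key
  refine ⟨hle, ?_⟩
  intro heq
  rw [hgain a, hgain b] at heq
  have hall := (Finset.sum_eq_sum_iff_of_le key).mp heq
  intro j hj
  have h1 : (∑ x ∈ Finset.Ico j n, a x * 2^x) = a j * 2^j + ∑ x ∈ Finset.Ico (j+1) n, a x * 2^x :=
    Finset.sum_eq_sum_Ico_succ_bot hj _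
  have h2 : (∑ x ∈ Finset.Ico j n, b x * 2^x) = b j * 2^j + ∑ x ∈ Finset.Ico (j+1) n, b x * 2^x :=
    Finset.sum_eq_sum_Ico_succ_bot hj _
  have h3 : (∑ x ∈ Finset.Ico (j+1) n, a x * 2^x) = ∑ x ∈ Finset.Ico (j+1) n, b x * 2^x := by
    rcases Nat.lt_or_ge (j+1) n with h | h
    · exact hall (j+1) (Finset.mem_range.mpr h)
    · have hn : j + 1 = n := by omega
      rw [hn, Finset.Ico_self]
      simp
  have h4 := hall j (Finset.mem_range.mpr hj)
  have h5 : a j * 2^j = b j * 2^j := by omega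
  have hp : 0 < (2:ℕ)^j := pow_pos (by norm_num) j
  exact Nat.eq_of_mul_eq_mul_right hp h5

/-- Without the performance constraint, among all multiplicity assignments
`a : stage → ℕ` with `a j ≤ N/2^j` freezing exactly `k'` channels
(`∑ a j · 2^j = k'`, `k' < N = 2^n`), the total complexity gain
`∑ a j · (j+1) · 2^j` is maximized exactly by the binary digits of `k'`;
in particular any optimal solution has `a j ≤ 1` for all `j`. -/
theorem stmt_3 (n k' : ℕ) (hk : k' < 2 ^ n)
    (a : ℕ → ℕ)
    (hfeas : ∀ j < n, a j ≤ 2 ^ n / 2 ^ j)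
    (hrate : ∑ j ∈ Finset.range n, a j * 2 ^ j = k') :
    (∑ j ∈ Finset.range n, a j * ((j + 1) * 2 ^ j) ≤
        ∑ j ∈ Finset.range n, (if k'.testBit j then 1 else 0) * ((j + 1) * 2 ^ j)) ∧
    ((∑ j ∈ Finset.range n, a j * ((j + 1) * 2 ^ j) =
        ∑ j ∈ Finset.range n, (if k'.testBit j then 1 else 0) * ((j + 1) * 2 ^ j)) →
      (∀ j < n, a j = if k'.testBit j then 1 else 0) ∧ ∀ j < n, a j ≤ 1) := by
  have hb1 : ∀ j, (if k'.testBit j then 1 else 0) ≤ 1 := by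
    intro j; split <;> simp
  obtain ⟨h1, h2⟩ := main_aux n k' a (fun j => if k'.testBit j then 1 else 0) hb1
    (bits_sum n k' hk) hrate
  exact ⟨h1, fun heq => ⟨h2 heq, fun j hj => (h2 heq j hj) ▸ hb1 j⟩⟩
end

section
/- Suppose the performance constraint threshold satisfies m' ≤ m_max, where m_max = max over subsets A of size k of Σ_{i∈A} I(i). Then the optimization problem (maximize Σ c_i x_i subject to Σ f_i x_i = N - k, Σ m_i x_i ≤ N·I(W) - m', mutual exclusiveness x_i + x_j ≤ 1 for descendant pairs, x_i ∈ {0,1}) is feasible: there exists an assignment x satisfying all constraints. -/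
/-- If `m' ≤ m_max`, the optimization problem (maximize gain subject to the
rate constraint `∑ f_i x_i = N - k`, the performance constraint
`∑ m_i x_i ≤ N·I(W) - m'`, and mutual exclusiveness between groups and their
descendants) is feasible. -/
theorem stmt_8 (n N k : ℕ) (hN : N = 2 ^ n) (hk : 0 < k) (hkN : k ≤ N)
    (I : Fin N → ℝ) (hI : ∀ i, 0 ≤ I i) (IW : ℝ)
    (htot : ∑ i, I i = N * IW)
    (g : Fin (2 * N - 1) → Finset (Fin N))
    (hleaf : ∀ i : Fin N, ∃ l, g l = {i})
    (Desc : Fin (2 * N - 1) → Fin (2 * N - 1) → Prop)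
    (hdesc : ∀ i j, Desc i j → g j ⊂ g i)
    (m' mmax : ℝ)
    (hmmax : IsGreatest {s : ℝ | ∃ A : Finset (Fin N), A.card = k ∧ s = ∑ i ∈ A, I i} mmax)
    (hm' : m' ≤ mmax) :
    ∃ x : Fin (2 * N - 1) → ℕ,
      (∀ i, x i ≤ 1) ∧
      (∑ i, (g i).card * x i = N - k) ∧
      ((∑ i, (x i : ℝ) * ∑ j ∈ g i, I j) ≤ N * IW - m') ∧
      (∀ i j, Desc i j → x i + x j ≤ 1) := by
  obtain ⟨A, hAcard, hAsum⟩ := hmmax.1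
  choose f hf using hleaf
  have hfinj : Function.Injective f := by
    intro a b hab
    have h : ({a} : Finset (Fin N)) = {b} := by rw [← hf a, ← hf b, hab]
    simpa using h
  set S : Finset (Fin (2 * N - 1)) := Aᶜ.image f with hS
  have hSmem : ∀ l ∈ S, ∃ a ∉ A, g l = {a} := by
    intro l hl
    obtain ⟨a, ha, rfl⟩ := Finset.mem_image.mp hl
    exact ⟨a, by simpa using ha, hf a⟩
  refine ⟨fun l => if l ∈ S then 1 else 0, ?_, ?_, ?_, ?_⟩
  · intro i; dsimp only; split <;> simp
  · have h1 : ∑ i, (g i).card * (if i ∈ S then 1 else 0)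
        = ∑ i ∈ S, (g i).card := by
      simp only [mul_ite, mul_one, mul_zero, Finset.sum_ite_mem, Finset.univ_inter]
    rw [h1, hS, Finset.sum_image (fun a _ b _ h => hfinj h)]
    simp only [hf, Finset.card_singleton]
    simp [Finset.card_compl, hAcard]
  · dsimp only
    simp only [Nat.cast_ite, Nat.cast_one, Nat.cast_zero, ite_mul, one_mul, zero_mul,
      Finset.sum_ite_mem, Finset.univ_inter]
    rw [hS, Finset.sum_image (fun a _ b _ h => hfinj h)]
    simp only [hf, Finset.sum_singleton]
    have h2 : ∑ a ∈ Aᶜ, I a + ∑ a ∈ A, I a = ∑ a, I a := Finset.sum_compl_add_sum A I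
    rw [htot] at h2
    linarith [hAsum ▸ hm']
  · intro i j hij
    dsimp only
    by_cases hi : i ∈ S <;> by_cases hj : j ∈ S <;> simp [hi, hj]
    obtain ⟨a, _, hga⟩ := hSmem i hi
    obtain ⟨b, _, hgb⟩ := hSmem j hj
    have := Finset.card_lt_card (hdesc i j hij)
    rw [hga, hgb] at this
    simp at this
end
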